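/- For all positive integers r and n with r dividing n and n/r ≥ 3, there exists a 2r-regular graph G on n vertices such that, with every vertex assigned threshold r, G has a dynamic monopoly of size r. -/

import Mathlib

open SimpleGraph

/-- One step of the irreversible activation process: every vertex with at least `τ v`
active neighbors becomes active, and active vertices stay active. -/
def activationStep {V : Type*} (G : SimpleGraph V) (τ : V → ℕ) (A : Set V) : Set V :=
  A ∪ {v | τ v ≤ (G.neighborSet v ∩ A).ncard}

/-- `D` is a dynamic monopoly (dynamo) of `(G, τ)`: iterating the activation process
starting from `D` eventually activates all vertices. -/
def IsDynamo {V : Type*} (G : SimpleGraph V) (τ : V → ℕ) (D : Set V) : Prop :=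
  ∃ j : ℕ, (activationStep G τ)^[j] D = Set.univ

/-- `K` is (the vertex set of) a resistant subgraph of `(G, τ)`:
every vertex `v` of `K` satisfies `d_K(v) ≥ d_G(v) − τ(v) + 1` (as integers). -/
def IsResistant {V : Type*} (G : SimpleGraph V) (τ : V → ℕ) (K : Set V) : Prop :=
  K.Nonempty ∧ ∀ v ∈ K, (G.neighborSet v).ncard + 1 ≤ (G.neighborSet v ∩ K).ncard + τ v

/-- The minimum size of a dynamic monopoly of `(G, τ)`. -/
noncomputable def dyn {V : Type*} (G : SimpleGraph V) (τ : V → ℕ) : ℕ :=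
  sInf {k : ℕ | ∃ D : Set V, D.ncard = k ∧ IsDynamo G τ D}

/-- For all positive `r`, `n` with `r ∣ n` and `n/r ≥ 3` there is a `2r`-regular graph on
`n` vertices with constant threshold `r` admitting a dynamic monopoly of size `r`. -/
theorem stmt10 (r n : ℕ) (hr : 0 < r) (hdvd : r ∣ n) (hq : 3 ≤ n / r) :
    ∃ G : SimpleGraph (Fin n),
      (∀ v, (G.neighborSet v).ncard = 2 * r) ∧
      ∃ D : Set (Fin n), D.ncard = r ∧ IsDynamo G (fun _ => r) D := by
  set q := n / r with hq'
  have hn : n = q * r := by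
    rw [hq', Nat.div_mul_cancel hdvd]
  haveI : NeZero q := ⟨by omega⟩
  -- the block of a vertex
  set blk : Fin n → ZMod q := fun v => (((v : ℕ) / r : ℕ) : ZMod q) with hblk
  have hblt : ∀ v : Fin n, (v : ℕ) / r < q := by
    intro v
    have hv : (v : ℕ) < q * r := by rw [← hn]; exact v.isLt
    exact Nat.div_lt_of_lt_mul (by rwa [mul_comm] at hv)
  have hinj : ∀ a b : ℕ, a < q → b < q → ((a : ZMod q) = (b : ZMod q)) → a = b := by
    intro a b ha hb h
    have := congrArg ZMod.val h
    rwa [ZMod.val_cast_of_lt ha, ZMod.val_cast_of_lt hb] at this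
  -- fibers
  set fib : ZMod q → Set (Fin n) := fun c => {w | blk w = c} with hfib
  have fibcard : ∀ c : ZMod q, (fib c).ncard = r := by
    intro c
    have hc : c.val < q := ZMod.val_lt c
    have hset : fib c = {w : Fin n | (w : ℕ) / r = c.val} := by
      ext w
      simp only [hfib, hblk, Set.mem_setOf_eq]
      constructor
      · intro h
        exact hinj _ _ (hblt w) hc (by rw [h]; simp [ZMod.natCast_val, ZMod.cast_id])
      · intro h
        rw [h]; simp [ZMod.natCast_val, ZMod.cast_id]
    rw [hset]
    have e : {w : Fin n // (w : ℕ) / r = c.val} ≃ Fin r :=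
      { toFun := fun w => ⟨(w : Fin n) % r, Nat.mod_lt _ hr⟩
        invFun := fun i => ⟨⟨c.val * r + i, by
            have h1 : (c.val + 1) * r ≤ q * r := Nat.mul_le_mul_right r hc
            have h2 : (i : ℕ) < r := i.isLt
            rw [hn]; nlinarith [h1, h2]⟩, by
          show (c.val * r + (i : ℕ)) / r = c.val
          rw [mul_comm, Nat.mul_add_div hr, Nat.div_eq_of_lt i.isLt]
          omega⟩
        left_inv := by
          rintro ⟨w, hw⟩
          apply Subtype.ext
          apply Fin.ext
          show c.val * r + (w : ℕ) % r = (w : ℕ)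
          have := Nat.div_add_mod (w : ℕ) r
          rw [← hw, mul_comm]
          omega
        right_inv := by
          rintro ⟨i, hi⟩
          apply Fin.ext
          show (c.val * r + i) % r = i
          rw [mul_comm, Nat.mul_add_mod, Nat.mod_eq_of_lt hi] }
    rw [← Nat.card_coe_set_eq]
    have : Nat.card {w : Fin n | (w : ℕ) / r = c.val} = Nat.card (Fin r) := Nat.card_congr e
    simpa using this
  have hone : (1 : ZMod q) ≠ 0 := by
    intro h
    have : ((1 : ℕ) : ZMod q) = ((0 : ℕ) : ZMod q) := by simpa using h
    have := hinj 1 0 (by omega) (by omega) this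
    omega
  -- the graph
  set G : SimpleGraph (Fin n) :=
    { Adj := fun v w => blk w = blk v + 1 ∨ blk w = blk v - 1
      symm := by
        constructor
        intro v w h
        rcases h with h | h
        · exact Or.inr (by linear_combination -h)
        · exact Or.inl (by linear_combination -h)
      loopless := by
        constructor
        intro v h
        rcases h with h | h
        · exact hone (by linear_combination -h)
        · exact hone (by linear_combination h) } with hG
  have hNbr : ∀ v : Fin n, G.neighborSet v = fib (blk v + 1) ∪ fib (blk v - 1) := by
    intro v
    ext w
    simp only [SimpleGraph.mem_neighborSet, hG, hfib, Set.mem_union, Set.mem_setOf_eq]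
  have hdisj : ∀ v : Fin n, Disjoint (fib (blk v + 1)) (fib (blk v - 1)) := by
    intro v
    rw [Set.disjoint_left]
    intro w h1 h2
    simp only [hfib, Set.mem_setOf_eq] at h1 h2
    have h3 : blk v + 1 = blk v - 1 := by rw [← h1, h2]
    have h4 : (2 : ZMod q) = 0 := by linear_combination h3
    have h5 : ((2 : ℕ) : ZMod q) = ((0 : ℕ) : ZMod q) := by push_cast; simpa using h4
    have := hinj 2 0 (by omega) (by omega) h5
    omega
  refine ⟨G, ?_, fib 0, fibcard 0, ?_⟩
  · intro v
    rw [hNbr v, Set.ncard_union_eq (hdisj v) (Set.toFinite _) (Set.toFinite _),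
      fibcard, fibcard]
    omega
  · -- dynamo
    set τ : Fin n → ℕ := fun _ => r with hτ
    have key : ∀ (A : Set (Fin n)) (c : ZMod q), fib c ⊆ A →
        fib (c + 1) ⊆ activationStep G τ A := by
      intro A c hA v hv
      right
      simp only [Set.mem_setOf_eq, hτ]
      have hsub : fib c ⊆ G.neighborSet v ∩ A := by
        intro w hw
        refine ⟨?_, hA hw⟩
        rw [hNbr v]
        right
        simp only [hfib, Set.mem_setOf_eq] at hv hw ⊢
        rw [hw, hv]; ring
      calc r = (fib c).ncard := (fibcard c).symm
        _ ≤ (G.neighborSet v ∩ A).ncard := Set.ncard_le_ncard hsub (Set.toFinite _)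
    have iter : ∀ k : ℕ, fib ((k : ℕ) : ZMod q) ⊆ (activationStep G τ)^[k] (fib 0) := by
      intro k
      induction k with
      | zero => simp
      | succ k ih =>
        rw [Function.iterate_succ_apply']
        have : ((k + 1 : ℕ) : ZMod q) = ((k : ℕ) : ZMod q) + 1 := by push_cast; ring
        rw [this]
        exact key _ _ ih
    have mono : ∀ k m : ℕ, k ≤ m →
        (activationStep G τ)^[k] (fib 0) ⊆ (activationStep G τ)^[m] (fib 0) := by
      intro k m hkm
      induction m with
      | zero =>
        have : k = 0 := by omega
        subst this; exact subset_rfl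
      | succ m ih =>
        rcases Nat.lt_or_ge k (m + 1) with h | h
        · rw [Function.iterate_succ_apply']
          refine (ih (by omega)).trans ?_
          exact Set.subset_union_left
        · have : k = m + 1 := by omega
          subst this; exact subset_rfl
    refine ⟨q, ?_⟩
    apply Set.eq_univ_of_forall
    intro v
    have hv : v ∈ fib (((v : ℕ) / r : ℕ) : ZMod q) := rfl
    exact mono _ _ (le_of_lt (hblt v)) (iter ((v : ℕ) / r) hv)
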